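/- Let A = (a_{n,k}) be an infinite real matrix with sup_n ∑_k |a_{n,k}| < ∞. If limsup_n A_n x ≤ limsup_n x_n for every bounded real sequence x, then lim_n ∑_k a_{n,k} = 1 and lim_n ∑_k |a_{n,k}| = 1. -/

import Mathlib

open Filter

lemma stmt6_mul_sign (x : ℝ) : x * Real.sign x = |x| := by
  rcases lt_trichotomy x 0 with h | h | h
  · rw [Real.sign_of_neg h, abs_of_neg h]; ring
  · simp [h]
  · rw [Real.sign_of_pos h, abs_of_pos h]; ring

lemma stmt6_abs_sign (x : ℝ) : |Real.sign x| ≤ 1 := by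
  rcases lt_trichotomy x 0 with h | h | h <;>
    simp [Real.sign_of_neg, Real.sign_of_pos, h]

set_option maxHeartbeats 1000000 in
theorem stmt6 (a : ℕ → ℕ → ℝ) (C : ℝ)
    (hnorm : ∀ n, Summable (fun k => |a n k|) ∧ ∑' k, |a n k| ≤ C)
    (hcore : ∀ x : ℕ → ℝ, (∃ M, ∀ n, |x n| ≤ M) →
      limsup (fun n => ∑' k, a n k * x k) atTop ≤ limsup x atTop) :
    Tendsto (fun n => ∑' k, a n k) atTop (nhds 1) ∧
      Tendsto (fun n => ∑' k, |a n k|) atTop (nhds 1) := by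
  have hTs : ∀ n, Summable fun k => |a n k| := fun n => (hnorm n).1
  have hSs : ∀ n, Summable (a n) := fun n => (hTs n).of_abs
  set T : ℕ → ℝ := fun n => ∑' k, |a n k| with hTdef
  set S : ℕ → ℝ := fun n => ∑' k, a n k with hSdef
  have hTle : ∀ n, T n ≤ C := fun n => (hnorm n).2
  have hT0 : ∀ n, 0 ≤ T n := fun n => tsum_nonneg (fun k => abs_nonneg _)
  have habs_tsum : ∀ f : ℕ → ℝ, Summable (fun k => |f k|) → |∑' k, f k| ≤ ∑' k, |f k| := by
    intro f hf
    simpa [Real.norm_eq_abs] using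
      norm_tsum_le_tsum_norm (f := f) (by simpa [Real.norm_eq_abs] using hf)
  -- summability of products with bounded sequences
  have hxsum : ∀ x : ℕ → ℝ, (∀ k, |x k| ≤ 1) → ∀ n, Summable fun k => |a n k * x k| := by
    intro x hx n
    refine Summable.of_nonneg_of_le (fun k => abs_nonneg _) (fun k => ?_) (hTs n)
    rw [abs_mul]
    exact mul_le_of_le_one_right (abs_nonneg _) (hx k)
  have hprod_le : ∀ x : ℕ → ℝ, (∀ k, |x k| ≤ 1) → ∀ n, (∑' k, |a n k * x k|) ≤ T n := by
    intro x hx n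
    refine Summable.tsum_le_tsum (fun k => ?_) (hxsum x hx n) (hTs n)
    rw [abs_mul]
    exact mul_le_of_le_one_right (abs_nonneg _) (hx k)
  have hAx_abs : ∀ x : ℕ → ℝ, (∀ k, |x k| ≤ 1) → ∀ n, |∑' k, a n k * x k| ≤ T n := by
    intro x hx n
    exact (habs_tsum _ (hxsum x hx n)).trans (hprod_le x hx n)
  have hSleT : ∀ n, |S n| ≤ T n := fun n => habs_tsum _ (hTs n)
  -- columns tend to zero
  have hcol : ∀ k, Tendsto (fun n => a n k) atTop (nhds 0) := by
    intro k
    have key : ∀ s : ℝ, |s| ≤ 1 →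
        limsup (fun n => (a n k) * s) atTop ≤ 0 := by
      intro s hs
      have hb : ∀ m, |(if m = k then s else 0 : ℝ)| ≤ 1 := by
        intro m; split <;> simp [hs]
      have h1 := hcore (fun m => if m = k then s else 0) ⟨1, hb⟩
      have h2 : (fun n => ∑' k', a n k' * (if k' = k then s else 0)) =
          fun n => a n k * s := by
        funext n
        rw [tsum_eq_single k (fun b hb => by simp [hb])]
        simp
      have h3 : limsup (fun m => if m = k then s else 0 : ℕ → ℝ) atTop = 0 := by
        rw [limsup_congr (v := fun _ => (0:ℝ))
          (by filter_upwards [eventually_gt_atTop k] with m hm; simp [hm.ne']),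
          limsup_const]
      rw [h2, h3] at h1
      exact h1
    have hbd : ∀ s : ℝ, |s| ≤ 1 → IsBoundedUnder (· ≤ ·) atTop (fun n => a n k * s) := by
      intro s hs
      refine isBoundedUnder_of ⟨C, fun n => ?_⟩
      calc a n k * s ≤ |a n k * s| := le_abs_self _
        _ ≤ |a n k| := by rw [abs_mul]; exact mul_le_of_le_one_right (abs_nonneg _) hs
        _ ≤ T n := Summable.le_tsum (hTs n) k (fun _ _ => abs_nonneg _)
        _ ≤ C := hTle n
    rw [NormedAddCommGroup.tendsto_nhds_zero]
    intro ε hε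
    have e1 : ∀ᶠ n in atTop, a n k * 1 < ε :=
      eventually_lt_of_limsup_lt (lt_of_le_of_lt (key 1 (by norm_num)) hε)
        (hbd 1 (by norm_num))
    have e2 : ∀ᶠ n in atTop, a n k * (-1) < ε :=
      eventually_lt_of_limsup_lt (lt_of_le_of_lt (key (-1) (by norm_num)) hε)
        (hbd (-1) (by norm_num))
    filter_upwards [e1, e2] with n h1 h2
    rw [Real.norm_eq_abs, abs_lt]
    constructor <;> nlinarith
  -- row sums tend to 1
  have hSbd : IsBoundedUnder (· ≤ ·) atTop S :=
    isBoundedUnder_of ⟨C, fun n => ((le_abs_self _).trans (hSleT n)).trans (hTle n)⟩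
  have hSbd' : IsBoundedUnder (· ≤ ·) atTop (fun n => -S n) :=
    isBoundedUnder_of ⟨C, fun n =>
      ((neg_le_abs _).trans (hSleT n)).trans (hTle n)⟩
  have hSlim : limsup S atTop ≤ 1 := by
    have h := hcore (fun _ => 1) ⟨1, fun n => by norm_num⟩
    simpa [limsup_const, hSdef] using h
  have hSlim' : limsup (fun n => -S n) atTop ≤ -1 := by
    have h := hcore (fun _ => -1) ⟨1, fun n => by norm_num⟩
    simpa [limsup_const, hSdef, mul_neg_one, tsum_neg] using h
  have hStend : Tendsto S atTop (nhds 1) := by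
    rw [Metric.tendsto_atTop]
    intro ε hε
    have e1 : ∀ᶠ n in atTop, S n < 1 + ε :=
      eventually_lt_of_limsup_lt (lt_of_le_of_lt hSlim (by linarith)) hSbd
    have e2 : ∀ᶠ n in atTop, -S n < -1 + ε :=
      eventually_lt_of_limsup_lt (lt_of_le_of_lt hSlim' (by linarith)) hSbd'
    obtain ⟨N, hN⟩ := eventually_atTop.1 (e1.and e2)
    exact ⟨N, fun n hn => by
      have := hN n hn
      rw [Real.dist_eq, abs_lt]
      constructor <;> linarith [this.1, this.2]⟩
  refine ⟨hStend, ?_⟩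
  -- absolute row sums: limsup ≤ 1 by gliding hump
  have hTbd : IsBoundedUnder (· ≤ ·) atTop T := isBoundedUnder_of ⟨C, hTle⟩
  have hTbd' : IsBoundedUnder (· ≥ ·) atTop T := isBoundedUnder_of ⟨0, hT0⟩
  set L := limsup T atTop with hLdef
  have hLle : ¬ (1 < L) := by
    intro hL
    set ε := (L - 1) / 6 with hεdef
    have hε0 : 0 < ε := by rw [hεdef]; linarith
    set P : ℕ → ℕ → ℝ := fun n m => ∑ k ∈ Finset.range m, |a n k| with hPdef
    have hPleT : ∀ n m, P n m ≤ T n := fun n m =>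
      Summable.sum_le_tsum (Finset.range m) (fun _ _ => abs_nonneg _) (hTs n)
    have htail : ∀ n m, ∑' k, |a n (k + m)| = T n - P n m := by
      intro n m
      have := Summable.sum_add_tsum_nat_add (f := fun k => |a n k|) m (hTs n)
      rw [hPdef, hTdef]; dsimp only; linarith
    have hfreq : ∃ᶠ n in atTop, L - ε < T n :=
      frequently_lt_of_lt_limsup hTbd'.isCoboundedUnder_le (by linarith)
    have hPcol : ∀ m, Tendsto (fun n => P n m) atTop (nhds 0) := by
      intro m
      have h := tendsto_finset_sum (Finset.range m)
        (fun k _ => ((hcol k).norm : Tendsto (fun n => ‖a n k‖) atTop (nhds ‖(0:ℝ)‖)))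
      simpa [Real.norm_eq_abs] using h
    have step : ∀ N m : ℕ, ∃ p : ℕ × ℕ, N < p.1 ∧ m < p.2 ∧ L - ε < T p.1 ∧
        P p.1 m < ε ∧ T p.1 - ε < P p.1 p.2 := by
      intro N m
      have h1 : ∀ᶠ n in atTop, P n m < ε :=
        (hPcol m).eventually (eventually_lt_nhds hε0)
      obtain ⟨n, hn1, hn2, hn3⟩ :=
        (hfreq.and_eventually (h1.and (eventually_gt_atTop N))).exists
      have h3 : Tendsto (fun m' => P n m') atTop (nhds (T n)) :=
        ((hTs n).hasSum).tendsto_sum_nat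
      obtain ⟨m', hm'1, hm'2⟩ :=
        ((h3.eventually (eventually_gt_nhds (by linarith : T n - ε < T n))).and
          (eventually_gt_atTop m)).exists
      exact ⟨(n, m'), hn3, hm'2, hn1, hn2, hm'1⟩
    choose f hf1 hf2 hf3 hf4 hf5 using step
    obtain ⟨g, hgs⟩ : ∃ g : ℕ → ℕ × ℕ, ∀ j, g (j + 1) = f (g j).1 (g j).2 :=
      ⟨fun j => Nat.rec (f 0 0) (fun _ p => f p.1 p.2) j, fun j => rfl⟩
    have hm1 : StrictMono fun j => (g j).1 :=
      strictMono_nat_of_lt_succ (fun j => by rw [hgs]; exact hf1 _ _)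
    have hm2 : StrictMono fun j => (g j).2 :=
      strictMono_nat_of_lt_succ (fun j => by rw [hgs]; exact hf2 _ _)
    have hex : ∀ k, ∃ j, k < (g j).2 :=
      fun k => ⟨k + 1, lt_of_lt_of_le (Nat.lt_succ_self k) hm2.le_apply⟩
    set idx : ℕ → ℕ := fun k => Nat.find (hex k) with hidxdef
    have hidx_eq : ∀ j k, (g j).2 ≤ k → k < (g (j + 1)).2 → idx k = j + 1 := by
      intro j k h1 h2
      have hle : idx k ≤ j + 1 := Nat.find_le h2
      have hgt : j < idx k := by
        by_contra h
        push_neg at h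
        exact absurd (Nat.find_spec (hex k)) (not_lt.2 (le_trans (hm2.monotone h) h1))
      omega
    set x : ℕ → ℝ := fun k => Real.sign (a ((g (idx k)).1) k) with hxdef
    have hxbd : ∀ k, |x k| ≤ 1 := fun k => stmt6_abs_sign _
    -- main estimate along rows (g (j+1)).1
    have key : ∀ j, 1 + ε < ∑' k, a ((g (j + 1)).1) k * x k := by
      intro j
      set r := (g (j + 1)).1 with hrdef
      set M := (g j).2 with hMdef
      set M' := (g (j + 1)).2 with hM'def
      have hMM' : M ≤ M' := (hm2 (Nat.lt_succ_self j)).le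
      have hD : P r M < ε := by rw [hrdef, hMdef, hgs]; exact hf4 _ _
      have hE : T r - ε < P r M' := by rw [hrdef, hM'def, hgs]; exact hf5 _ _
      have hC' : L - ε < T r := by rw [hrdef, hgs]; exact hf3 _ _
      have hsax : Summable fun k => |a r k * x k| := hxsum x hxbd r
      have hsax' : Summable fun k => a r k * x k := hsax.of_abs
      have split1 : ∑' k, a r k * x k =
          (∑ k ∈ Finset.range M', a r k * x k) + ∑' k, a r (k + M') * x (k + M') :=
        (Summable.sum_add_tsum_nat_add M' hsax').symm
      -- tail bound
      have htail_sum : Summable fun k => |a r (k + M') * x (k + M')| :=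
        (summable_nat_add_iff M').2 hsax
      have htb : |∑' k, a r (k + M') * x (k + M')| ≤ T r - P r M' := by
        rw [← htail r M']
        refine le_trans (habs_tsum _ htail_sum) (Summable.tsum_le_tsum (fun k => ?_) htail_sum
          ((summable_nat_add_iff M').2 (hTs r)))
        rw [abs_mul]
        exact mul_le_of_le_one_right (abs_nonneg _) (hxbd _)
      -- split the range sum
      have split2 : ∑ k ∈ Finset.range M', a r k * x k =
          (∑ k ∈ Finset.range M, a r k * x k) + ∑ k ∈ Finset.Ico M M', a r k * x k := by
        simp only [Finset.range_eq_Ico]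
        exact (Finset.sum_Ico_consecutive _ (Nat.zero_le M) hMM').symm
      have hIco : ∑ k ∈ Finset.Ico M M', a r k * x k = P r M' - P r M := by
        have e1 : ∀ k ∈ Finset.Ico M M', a r k * x k = |a r k| := by
          intro k hk
          rw [Finset.mem_Ico] at hk
          have : x k = Real.sign (a r k) := by
            rw [hxdef]
            dsimp only
            rw [hidx_eq j k hk.1 hk.2]
          rw [this, stmt6_mul_sign]
        rw [Finset.sum_congr rfl e1]
        have h2 : ∑ k ∈ Finset.Ico 0 M, |a r k| + ∑ k ∈ Finset.Ico M M', |a r k| =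
            ∑ k ∈ Finset.Ico 0 M', |a r k| :=
          Finset.sum_Ico_consecutive _ (Nat.zero_le M) hMM'
        rw [hPdef]; dsimp only
        simp only [Finset.range_eq_Ico]
        linarith
      have hhead : |∑ k ∈ Finset.range M, a r k * x k| ≤ P r M := by
        refine le_trans (Finset.abs_sum_le_sum_abs _ _) (Finset.sum_le_sum fun k _ => ?_)
        rw [abs_mul]
        exact mul_le_of_le_one_right (abs_nonneg _) (hxbd _)
      have h1 : -(T r - P r M') ≤ ∑' k, a r (k + M') * x (k + M') :=
        neg_le_of_abs_le htb
      have h2 : -(P r M) ≤ ∑ k ∈ Finset.range M, a r k * x k := neg_le_of_abs_le hhead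
      have hεL : L - 5 * ε = 1 + ε := by rw [hεdef]; ring
      rw [split1, split2, hIco]
      linarith
    -- contradiction with the core hypothesis
    have hx_limsup : limsup x atTop ≤ 1 := by
      refine limsup_le_of_le ?_ (Eventually.of_forall fun k => le_of_abs_le (hxbd k))
      exact (isBoundedUnder_of (r := (· ≥ ·)) ⟨-1, fun k => neg_le_of_abs_le (hxbd k)⟩).isCoboundedUnder_le
    have hcore_x : limsup (fun n => ∑' k, a n k * x k) atTop ≤ 1 :=
      le_trans (hcore x ⟨1, hxbd⟩) hx_limsup
    have hev : ∀ᶠ m in atTop, (∑' k, a m k * x k) < 1 + ε :=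
      eventually_lt_of_limsup_lt (lt_of_le_of_lt hcore_x (by linarith))
        (isBoundedUnder_of ⟨C, fun m =>
          ((le_abs_self _).trans (hAx_abs x hxbd m)).trans (hTle m)⟩)
    obtain ⟨N, hN⟩ := eventually_atTop.1 hev
    have hge : N ≤ (g (N + 1)).1 := le_trans (Nat.le_succ N) hm1.le_apply
    exact absurd (hN _ hge) (not_lt.2 (key N).le)
  -- conclude convergence of T to 1
  have hTlimsup : limsup T atTop ≤ 1 := not_lt.1 hLle
  rw [Metric.tendsto_atTop]
  intro ε hε
  have e1 : ∀ᶠ n in atTop, T n < 1 + ε :=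
    eventually_lt_of_limsup_lt (lt_of_le_of_lt hTlimsup (by linarith)) hTbd
  have e2 : ∀ᶠ n in atTop, 1 - ε < S n :=
    hStend.eventually (eventually_gt_nhds (by linarith))
  obtain ⟨N, hN⟩ := eventually_atTop.1 (e1.and e2)
  refine ⟨N, fun n hn => ?_⟩
  obtain ⟨h1, h2⟩ := hN n hn
  have h3 : S n ≤ T n := le_trans (le_abs_self _) (hSleT n)
  rw [Real.dist_eq, abs_lt]
  constructor <;> linarith
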